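/- Let N : ℝ² → ℝ³ be twice continuously differentiable, let A, S, B : ℝ² → ℝ be continuously differentiable and F : ℝ² → ℝ be such that (A·N_x)_x + (S·N_y)_x + (B·N_y)_y + (S·N_x)_y = F·N at every point of ℝ². Then the ℝ³-valued 1-form with components (A·(N×N_x) + S·(N×N_y)) and (S·(N×N_x) + B·(N×N_y)) is divergence free: ∂_x( A·(N×N_x) + S·(N×N_y) ) + ∂_y( S·(N×N_x) + B·(N×N_y) ) = 0 at every point. -/

import Mathlib

open Matrix

/-- Partial derivative with respect to the first coordinate. -/
noncomputable def pdx (f : ℝ × ℝ → (Fin 3 → ℝ)) (p : ℝ × ℝ) : Fin 3 → ℝ :=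
  fderiv ℝ f p (1, 0)

/-- Partial derivative with respect to the second coordinate. -/
noncomputable def pdy (f : ℝ × ℝ → (Fin 3 → ℝ)) (p : ℝ × ℝ) : Fin 3 → ℝ :=
  fderiv ℝ f p (0, 1)

/-- The cross product as a continuous bilinear map. -/
noncomputable def crossL : (Fin 3 → ℝ) →L[ℝ] (Fin 3 → ℝ) →L[ℝ] (Fin 3 → ℝ) :=
  LinearMap.toContinuousLinearMap
    ((LinearMap.toContinuousLinearMap :
        ((Fin 3 → ℝ) →ₗ[ℝ] (Fin 3 → ℝ)) ≃ₗ[ℝ] _).toLinearMap ∘ₗ crossProduct)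

@[simp] lemma crossL_apply (a b : Fin 3 → ℝ) : crossL a b = a ⨯₃ b := rfl

lemma hasFDerivAt_cross {f g : ℝ × ℝ → Fin 3 → ℝ} {f' g' : ℝ × ℝ →L[ℝ] (Fin 3 → ℝ)} {p : ℝ × ℝ}
    (hf : HasFDerivAt f f' p) (hg : HasFDerivAt g g' p) :
    HasFDerivAt (fun q => f q ⨯₃ g q)
      ((crossL.isBoundedBilinearMap.deriv (f p, g p)).comp (f'.prod g')) p :=
  by have := (crossL.isBoundedBilinearMap.hasFDerivAt (f p, g p)).comp p (hf.prodMk hg); exact this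

lemma fderiv_cross {f g : ℝ × ℝ → Fin 3 → ℝ} {p : ℝ × ℝ}
    (hf : DifferentiableAt ℝ f p) (hg : DifferentiableAt ℝ g p) (v : ℝ × ℝ) :
    fderiv ℝ (fun q => f q ⨯₃ g q) p v
      = fderiv ℝ f p v ⨯₃ g p + f p ⨯₃ fderiv ℝ g p v := by
  have h := hasFDerivAt_cross hf.hasFDerivAt hg.hasFDerivAt
  rw [h.fderiv]
  simp [IsBoundedBilinearMap.deriv_apply, add_comm]

/-- If `N` satisfies the self-adjoint PDE
`(A N_x)_x + (S N_y)_x + (B N_y)_y + (S N_x)_y = F N`, then the `ℝ³`-valued 1-form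
with components `A (N×N_x) + S (N×N_y)` and `S (N×N_x) + B (N×N_y)` is
divergence free. -/
theorem divergence_free_one_form
    (N : ℝ × ℝ → (Fin 3 → ℝ)) (A S B F : ℝ × ℝ → ℝ)
    (hN : ContDiff ℝ 2 N)
    (hA : ContDiff ℝ 1 A) (hS : ContDiff ℝ 1 S) (hB : ContDiff ℝ 1 B)
    (heq : ∀ p,
      pdx (fun q => A q • pdx N q) p + pdx (fun q => S q • pdy N q) p
        + pdy (fun q => B q • pdy N q) p + pdy (fun q => S q • pdx N q) p
      = F p • N p) :
    ∀ p,
      pdx (fun q => A q • (N q ⨯₃ pdx N q) + S q • (N q ⨯₃ pdy N q)) p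
        + pdy (fun q => S q • (N q ⨯₃ pdx N q) + B q • (N q ⨯₃ pdy N q)) p = 0 := by
  intro p
  have hN1 : ContDiff ℝ 1 N := hN.of_le (by norm_num)
  have hNx : ContDiff ℝ 1 (fun q => pdx N q) := by
    simp only [pdx]
    exact (hN.fderiv_right (by norm_num)).clm_apply contDiff_const
  have hNy : ContDiff ℝ 1 (fun q => pdy N q) := by
    simp only [pdy]
    exact (hN.fderiv_right (by norm_num)).clm_apply contDiff_const
  have hANx : ContDiff ℝ 1 (fun q => A q • pdx N q) := hA.smul hNx
  have hSNy : ContDiff ℝ 1 (fun q => S q • pdy N q) := hS.smul hNy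
  have hSNx : ContDiff ℝ 1 (fun q => S q • pdx N q) := hS.smul hNx
  have hBNy : ContDiff ℝ 1 (fun q => B q • pdy N q) := hB.smul hNy
  -- rewrite the two components as `N ⨯₃ (…)`
  have e1 : (fun q => A q • (N q ⨯₃ pdx N q) + S q • (N q ⨯₃ pdy N q))
      = fun q => N q ⨯₃ (A q • pdx N q + S q • pdy N q) := by
    funext q; simp [map_add, LinearMap.map_smul]
  have e2 : (fun q => S q • (N q ⨯₃ pdx N q) + B q • (N q ⨯₃ pdy N q))
      = fun q => N q ⨯₃ (S q • pdx N q + B q • pdy N q) := by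
    funext q; simp [map_add, LinearMap.map_smul]
  have hNd : DifferentiableAt ℝ N p := (hN1.differentiable one_ne_zero) p
  have hPd : DifferentiableAt ℝ (fun q => A q • pdx N q + S q • pdy N q) p :=
    ((hANx.add hSNy).differentiable one_ne_zero) p
  have hQd : DifferentiableAt ℝ (fun q => S q • pdx N q + B q • pdy N q) p :=
    ((hSNx.add hBNy).differentiable one_ne_zero) p
  rw [e1, e2]
  show fderiv ℝ (fun q => N q ⨯₃ (A q • pdx N q + S q • pdy N q)) p (1, 0)
    + fderiv ℝ (fun q => N q ⨯₃ (S q • pdx N q + B q • pdy N q)) p (0, 1) = 0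
  rw [fderiv_cross hNd hPd, fderiv_cross hNd hQd]
  have hsum1 : ∀ v, fderiv ℝ (fun q => A q • pdx N q + S q • pdy N q) p v
      = fderiv ℝ (fun q => A q • pdx N q) p v + fderiv ℝ (fun q => S q • pdy N q) p v := by
    intro v
    rw [fderiv_fun_add ((hANx.differentiable one_ne_zero) p) ((hSNy.differentiable one_ne_zero) p)]
    rfl
  have hsum2 : ∀ v, fderiv ℝ (fun q => S q • pdx N q + B q • pdy N q) p v
      = fderiv ℝ (fun q => S q • pdx N q) p v + fderiv ℝ (fun q => B q • pdy N q) p v := by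
    intro v
    rw [fderiv_fun_add ((hSNx.differentiable one_ne_zero) p) ((hBNy.differentiable one_ne_zero) p)]
    rfl
  rw [hsum1, hsum2]
  have key := heq p
  simp only [pdx, pdy] at key ⊢
  -- group the `N ⨯₃ _` terms
  have : fderiv ℝ N p (1, 0) ⨯₃ (A p • pdx N p + S p • pdy N p)
      + (N p ⨯₃ (fderiv ℝ (fun q => A q • pdx N q) p (1, 0)
            + fderiv ℝ (fun q => S q • pdy N q) p (1, 0)))
      + (fderiv ℝ N p (0, 1) ⨯₃ (S p • pdx N p + B p • pdy N p)
      + (N p ⨯₃ (fderiv ℝ (fun q => S q • pdx N q) p (0, 1)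
            + fderiv ℝ (fun q => B q • pdy N q) p (0, 1))))
      = fderiv ℝ N p (1, 0) ⨯₃ (A p • pdx N p + S p • pdy N p)
      + fderiv ℝ N p (0, 1) ⨯₃ (S p • pdx N p + B p • pdy N p)
      + N p ⨯₃ (fderiv ℝ (fun q => A q • pdx N q) p (1, 0)
            + fderiv ℝ (fun q => S q • pdy N q) p (1, 0)
            + fderiv ℝ (fun q => B q • pdy N q) p (0, 1)
            + fderiv ℝ (fun q => S q • pdx N q) p (0, 1)) := by
    simp only [map_add]
    abel
  simp only [pdx, pdy] at this
  rw [this, key]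
  simp only [pdx, pdy, map_add, LinearMap.map_smul, cross_self, smul_zero, add_zero, zero_add]
  rw [← smul_add, cross_anticomm', smul_zero]
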